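/- Let G = (U ∪ V, E) be bipartite with |M(G)| > 0, fix u* ∈ U and v* ∈ V, and form G' by appending the path (u*, v', u'') to u* and the path (v*, u', v'') to v* (four new vertices, four new edges). Then |M(G')| = |M(G)|, and Σ_{v ∈ V'} |N_{u'',v}(G')| = Σ_{v ∈ V} |N_{u*,v}(G)| + |M(G)| + |N_{u*,v*}(G)|. -/
import Mathlib


/-- Matchings of a bipartite graph with parts `A`, `B` and edge relation `E`,
covering exactly the vertices `R ⊆ A` and `C ⊆ B`. -/
def matchOn {A B : Type*} [DecidableEq A] [DecidableEq B]
    (E : A → B → Prop) (R : Finset A) (C : Finset B) : Set (Finset (A × B)) :=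
  {M | M.card = R.card ∧ M.image Prod.fst = R ∧ M.image Prod.snd = C ∧
    ∀ p ∈ M, E p.1 p.2}

/-- The edge relation of the graph `G'` obtained from `G` by appending the path
`(u*, v', u'')` to `u*` and the path `(v*, u', v'')` to `v*`; on the `U`-side
`Sum.inr 0 = u'`, `Sum.inr 1 = u''`, and on the `V`-side `Sum.inr 0 = v'`,
`Sum.inr 1 = v''`.  The new edges are `{u*, v'}, {v', u''}, {v*, u'}, {u', v''}`. -/
def extendRel {U V : Type*} (E : U → V → Prop) (ustar : U) (vstar : V) :
    U ⊕ Fin 2 → V ⊕ Fin 2 → Prop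
  | Sum.inl u, Sum.inl v => E u v
  | Sum.inl u, Sum.inr j => u = ustar ∧ j = 0
  | Sum.inr i, Sum.inl v => i = 0 ∧ v = vstar
  | Sum.inr i, Sum.inr j => (i = 1 ∧ j = 0) ∨ (i = 0 ∧ j = 1)

set_option linter.unusedSectionVars false
namespace APaux

open Finset

variable {U V : Type*} [DecidableEq U] [DecidableEq V]

def lift : U × V → (U ⊕ Fin 2) × (V ⊕ Fin 2) := Prod.map Sum.inl Sum.inl

lemma lift_inj : Function.Injective (lift (U := U) (V := V)) := by
  intro a b h
  simpa [lift, Prod.ext_iff] using h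

section generic
variable {A B : Type*} [DecidableEq A] [DecidableEq B]

lemma matchOn_fst_injOn {E : A → B → Prop} {R : Finset A} {C : Finset B}
    {M : Finset (A × B)} (h : M ∈ matchOn E R C) : Set.InjOn Prod.fst (M : Set (A × B)) := by
  have : (M.image Prod.fst).card = M.card := by rw [h.2.1, h.1]
  exact Finset.card_image_iff.mp this

lemma matchOn_snd_injOn {E : A → B → Prop} {R : Finset A} {C : Finset B}
    {M : Finset (A × B)} (h : M ∈ matchOn E R C) (hRC : R.card = C.card) :
    Set.InjOn Prod.snd (M : Set (A × B)) := by
  have : (M.image Prod.snd).card = M.card := by rw [h.2.2.1, h.1, hRC]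
  exact Finset.card_image_iff.mp this

end generic

lemma pair_cases {E : U → V → Prop} {ustar : U} {vstar : V}
    {p : (U ⊕ Fin 2) × (V ⊕ Fin 2)} (h : extendRel E ustar vstar p.1 p.2) :
    (∃ u v, p = (Sum.inl u, Sum.inl v)) ∨ p = (Sum.inl ustar, Sum.inr 0) ∨
    p = (Sum.inr 0, Sum.inl vstar) ∨ p = (Sum.inr 1, Sum.inr 0) ∨
    p = (Sum.inr 0, Sum.inr 1) := by
  obtain ⟨a, b⟩ := p
  rcases a with u | i <;> rcases b with v | j <;> simp only [extendRel] at h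
  · exact Or.inl ⟨u, v, rfl⟩
  · obtain ⟨h1, h2⟩ := h
    subst h1; subst h2
    exact Or.inr (Or.inl rfl)
  · obtain ⟨h1, h2⟩ := h
    subst h1; subst h2
    exact Or.inr (Or.inr (Or.inl rfl))
  · rcases h with ⟨h1, h2⟩ | ⟨h1, h2⟩ <;> subst h1 <;> subst h2
    · exact Or.inr (Or.inr (Or.inr (Or.inl rfl)))
    · exact Or.inr (Or.inr (Or.inr (Or.inr rfl)))


variable {E : U → V → Prop} {ustar : U} {vstar : V}

lemma construct {R' : Finset (U ⊕ Fin 2)} {C' : Finset (V ⊕ Fin 2)}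
    {R : Finset U} {C : Finset V} {e : Finset ((U ⊕ Fin 2) × (V ⊕ Fin 2))}
    (hcard : R'.card = R.card + e.card)
    (hR' : R' = R.image Sum.inl ∪ e.image Prod.fst)
    (hC' : C' = C.image Sum.inl ∪ e.image Prod.snd)
    (hEe : ∀ p ∈ e, extendRel E ustar vstar p.1 p.2)
    (helift : ∀ p ∈ e, ∀ q : U × V, p ≠ lift q)
    {M : Finset (U × V)} (hM : M ∈ matchOn E R C) :
    M.image lift ∪ e ∈ matchOn (extendRel E ustar vstar) R' C' := by
  obtain ⟨hc, hf, hs, hE⟩ := hM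
  have hdisj : Disjoint (M.image lift) e := by
    rw [Finset.disjoint_left]
    rintro p hp hpe
    obtain ⟨q, hq, rfl⟩ := Finset.mem_image.mp hp
    exact helift _ hpe q rfl
  refine ⟨?_, ?_, ?_, ?_⟩
  · rw [Finset.card_union_of_disjoint hdisj,
      Finset.card_image_of_injective _ lift_inj, hc, hcard]
  · rw [Finset.image_union, hR', ← hf, Finset.image_image, Finset.image_image]
    rfl
  · rw [Finset.image_union, hC', ← hs, Finset.image_image, Finset.image_image]
    rfl
  · rintro p hp
    rcases Finset.mem_union.mp hp with hp | hp
    · obtain ⟨q, hq, rfl⟩ := Finset.mem_image.mp hp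
      exact hE q hq
    · exact hEe p hp


lemma reconstruct {R' : Finset (U ⊕ Fin 2)} {C' : Finset (V ⊕ Fin 2)}
    {R : Finset U} {C : Finset V} {e : Finset ((U ⊕ Fin 2) × (V ⊕ Fin 2))}
    (hcardRC : R'.card = C'.card)
    (hR : ∀ u : U, u ∈ R ↔ Sum.inl u ∈ R' ∧ Sum.inl u ∉ e.image Prod.fst)
    (hC : ∀ v : V, v ∈ C ↔ Sum.inl v ∈ C' ∧ Sum.inl v ∉ e.image Prod.snd)
    (helift : ∀ p ∈ e, ∀ q : U × V, p ≠ lift q)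
    {M' : Finset ((U ⊕ Fin 2) × (V ⊕ Fin 2))}
    (hM' : M' ∈ matchOn (extendRel E ustar vstar) R' C')
    (he : e ⊆ M')
    (hclass : ∀ p ∈ M', p ∈ e ∨ ∃ u v, p = (Sum.inl u, Sum.inl v)) :
    ∃ M ∈ matchOn E R C, M' = M.image lift ∪ e := by
  have injf := matchOn_fst_injOn hM'
  set M : Finset (U × V) := M'.preimage lift lift_inj.injOn with hMdef
  have hmem : ∀ q : U × V, q ∈ M ↔ lift q ∈ M' := fun q => Finset.mem_preimage
  have himg : M' = M.image lift ∪ e := by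
    ext p
    constructor
    · intro hp
      rcases hclass p hp with hpe | ⟨u, v, rfl⟩
      · exact Finset.mem_union_right _ hpe
      · exact Finset.mem_union_left _
          (Finset.mem_image.mpr ⟨(u, v), (hmem (u, v)).mpr hp, rfl⟩)
    · intro hp
      rcases Finset.mem_union.mp hp with hp | hp
      · obtain ⟨q, hq, rfl⟩ := Finset.mem_image.mp hp
        exact (hmem q).mp hq
      · exact he hp
  have hEM : ∀ q ∈ M, E q.1 q.2 := by
    intro q hq
    exact hM'.2.2.2 (lift q) ((hmem q).mp hq)
  have hfM : M.image Prod.fst = R := by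
    ext u
    rw [hR u]
    constructor
    · intro hu
      obtain ⟨q, hq, rfl⟩ := Finset.mem_image.mp hu
      have hq' : lift q ∈ M' := (hmem q).mp hq
      refine ⟨?_, ?_⟩
      · rw [← hM'.2.1]
        exact Finset.mem_image.mpr ⟨lift q, hq', rfl⟩
      · intro hcon
        obtain ⟨p, hpe, hp1⟩ := Finset.mem_image.mp hcon
        have : p = lift q := injf (he hpe) hq' hp1
        exact helift p hpe q this
    · rintro ⟨hu1, hu2⟩
      rw [← hM'.2.1] at hu1
      obtain ⟨p, hp, hp1⟩ := Finset.mem_image.mp hu1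
      rcases hclass p hp with hpe | ⟨u', v, rfl⟩
      · exact absurd (Finset.mem_image.mpr ⟨p, hpe, hp1⟩) hu2
      · obtain rfl : u' = u := by simpa using hp1
        exact Finset.mem_image.mpr ⟨(u', v), (hmem (u', v)).mpr hp, rfl⟩
  have hsM : M.image Prod.snd = C := by
    ext v
    rw [hC v]
    constructor
    · intro hv
      obtain ⟨q, hq, rfl⟩ := Finset.mem_image.mp hv
      have hq' : lift q ∈ M' := (hmem q).mp hq
      refine ⟨?_, ?_⟩
      · rw [← hM'.2.2.1]
        exact Finset.mem_image.mpr ⟨lift q, hq', rfl⟩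
      · intro hcon
        obtain ⟨p, hpe, hp2⟩ := Finset.mem_image.mp hcon
        have injs := matchOn_snd_injOn hM' hcardRC
        have : p = lift q := injs (he hpe) hq' hp2
        exact helift p hpe q this
    · rintro ⟨hv1, hv2⟩
      rw [← hM'.2.2.1] at hv1
      obtain ⟨p, hp, hp2⟩ := Finset.mem_image.mp hv1
      rcases hclass p hp with hpe | ⟨u, v', rfl⟩
      · exact absurd (Finset.mem_image.mpr ⟨p, hpe, hp2⟩) hv2
      · obtain rfl : v' = v := by simpa using hp2
        exact Finset.mem_image.mpr ⟨(u, v'), (hmem (u, v')).mpr hp, rfl⟩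
  have hinjM : Set.InjOn Prod.fst (M : Set (U × V)) := by
    intro q1 hq1 q2 hq2 h12
    have := injf ((hmem q1).mp hq1) ((hmem q2).mp hq2) (by simp [lift, h12])
    exact lift_inj this
  have hcM : M.card = R.card := by
    rw [← hfM, Finset.card_image_iff.mpr hinjM]
  exact ⟨M, ⟨hcM, hfM, hsM, hEM⟩, himg⟩

lemma ncard_case {R' : Finset (U ⊕ Fin 2)} {C' : Finset (V ⊕ Fin 2)}
    {R : Finset U} {C : Finset V} {e : Finset ((U ⊕ Fin 2) × (V ⊕ Fin 2))}
    (hcardRC : R'.card = C'.card)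
    (hcard : R'.card = R.card + e.card)
    (hR : ∀ u : U, u ∈ R ↔ Sum.inl u ∈ R' ∧ Sum.inl u ∉ e.image Prod.fst)
    (hC : ∀ v : V, v ∈ C ↔ Sum.inl v ∈ C' ∧ Sum.inl v ∉ e.image Prod.snd)
    (hR' : R' = R.image Sum.inl ∪ e.image Prod.fst)
    (hC' : C' = C.image Sum.inl ∪ e.image Prod.snd)
    (hEe : ∀ p ∈ e, extendRel E ustar vstar p.1 p.2)
    (helift : ∀ p ∈ e, ∀ q : U × V, p ≠ lift q)
    (hforce : ∀ M' ∈ matchOn (extendRel E ustar vstar) R' C',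
        e ⊆ M' ∧ ∀ p ∈ M', p ∈ e ∨ ∃ u v, p = (Sum.inl u, Sum.inl v)) :
    (matchOn (extendRel E ustar vstar) R' C').ncard = (matchOn E R C).ncard := by
  have hset : matchOn (extendRel E ustar vstar) R' C' =
      (fun M => M.image lift ∪ e) '' matchOn E R C := by
    ext M'
    constructor
    · intro h
      obtain ⟨hesub, hclass⟩ := hforce M' h
      obtain ⟨M, hM, rfl⟩ := reconstruct hcardRC hR hC helift h hesub hclass
      exact ⟨M, hM, rfl⟩
    · rintro ⟨M, hM, rfl⟩
      exact construct hcard hR' hC' hEe helift hM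
  rw [hset]
  apply Set.ncard_image_of_injective
  intro M1 M2 h
  have h1 : ∀ M : Finset (U × V),
      (M.image lift ∪ e).preimage lift lift_inj.injOn = M := by
    intro M
    ext q
    rw [Finset.mem_preimage, Finset.mem_union]
    constructor
    · rintro (h | h)
      · obtain ⟨q', hq', heq⟩ := Finset.mem_image.mp h
        exact lift_inj heq ▸ hq'
      · exact absurd rfl (helift _ h q)
    · exact fun h => Or.inl (Finset.mem_image_of_mem _ h)
  rw [← h1 M1, ← h1 M2]
  congr 1


variable [Fintype U] [Fintype V]

lemma case_perfect (hUV : Fintype.card U = Fintype.card V) :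
    (matchOn (extendRel E ustar vstar) Finset.univ Finset.univ).ncard =
      (matchOn E (Finset.univ : Finset U) (Finset.univ : Finset V)).ncard := by
  apply ncard_case
    (e := ({(Sum.inr 1, Sum.inr 0), (Sum.inr 0, Sum.inr 1)} :
      Finset ((U ⊕ Fin 2) × (V ⊕ Fin 2))))
  · simp [Finset.card_univ, Fintype.card_sum, hUV]
  · rw [Finset.card_insert_of_notMem (by simp), Finset.card_singleton]
    simp [Finset.card_univ, Fintype.card_sum]
  · intro u; simp
  · intro v; simp
  · ext x
    rcases x with u | i
    · simp
    · simp only [Finset.mem_univ, true_iff, Finset.mem_union, Finset.mem_image]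
      right
      refine ⟨(Sum.inr i, if i = 1 then Sum.inr 0 else Sum.inr 1), ?_, rfl⟩
      rcases Fin.exists_fin_two.mp ⟨i, rfl⟩ with h | h <;> subst h <;> simp
  · ext x
    rcases x with v | j
    · simp
    · simp only [Finset.mem_univ, true_iff, Finset.mem_union, Finset.mem_image]
      right
      refine ⟨(if j = 1 then Sum.inr 0 else Sum.inr 1, Sum.inr j), ?_, rfl⟩
      rcases Fin.exists_fin_two.mp ⟨j, rfl⟩ with h | h <;> subst h <;> simp
  · intro p hp
    rcases Finset.mem_insert.mp hp with rfl | hp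
    · simp [extendRel]
    · rcases Finset.mem_singleton.mp hp with rfl
      simp [extendRel]
  · intro p hp q
    rcases Finset.mem_insert.mp hp with rfl | hp
    · simp [lift, Prod.ext_iff]
    · rcases Finset.mem_singleton.mp hp with rfl
      simp [lift, Prod.ext_iff]
  · intro M' hM'
    have injf := matchOn_fst_injOn hM'
    have injs := matchOn_snd_injOn hM'
      (by simp [Finset.card_univ, Fintype.card_sum, hUV])
    obtain ⟨p, hp, hp1⟩ := Finset.mem_image.mp
      (show (Sum.inr 1 : U ⊕ Fin 2) ∈ M'.image Prod.fst by rw [hM'.2.1]; simp)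
    have h1 : ((Sum.inr 1, Sum.inr 0) : (U ⊕ Fin 2) × (V ⊕ Fin 2)) ∈ M' := by
      rcases pair_cases (hM'.2.2.2 p hp) with ⟨u, v, rfl⟩ | rfl | rfl | rfl | rfl
      · exact absurd hp1 (by simp)
      · exact absurd hp1 (by simp)
      · exact absurd hp1 (by simp)
      · exact hp
      · exact absurd hp1 (by simp)
    obtain ⟨q, hq, hq2⟩ := Finset.mem_image.mp
      (show (Sum.inr 1 : V ⊕ Fin 2) ∈ M'.image Prod.snd by rw [hM'.2.2.1]; simp)
    have h2 : ((Sum.inr 0, Sum.inr 1) : (U ⊕ Fin 2) × (V ⊕ Fin 2)) ∈ M' := by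
      rcases pair_cases (hM'.2.2.2 q hq) with ⟨u, v, rfl⟩ | rfl | rfl | rfl | rfl
      · exact absurd hq2 (by simp)
      · exact absurd hq2 (by simp)
      · exact absurd hq2 (by simp)
      · exact absurd hq2 (by simp)
      · exact hq
    refine ⟨Finset.insert_subset h1 (Finset.singleton_subset_iff.mpr h2), ?_⟩
    intro r hr
    rcases pair_cases (hM'.2.2.2 r hr) with ⟨u, v, rfl⟩ | rfl | rfl | rfl | rfl
    · exact Or.inr ⟨u, v, rfl⟩
    · have := injs hr h1 rfl
      exact absurd this (by simp)
    · have := injf hr h2 rfl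
      exact absurd this (by simp)
    · exact Or.inl (by simp)
    · exact Or.inl (by simp)


lemma case_inl (hUV : Fintype.card U = Fintype.card V) (v0 : V) :
    (matchOn (extendRel E ustar vstar)
        (Finset.univ.erase (Sum.inr 1)) (Finset.univ.erase (Sum.inl v0))).ncard =
      (matchOn E (Finset.univ.erase ustar) (Finset.univ.erase v0)).ncard := by
  have hpos : 0 < Fintype.card U := Fintype.card_pos_iff.mpr ⟨ustar⟩
  apply ncard_case
    (e := ({(Sum.inl ustar, Sum.inr 0), (Sum.inr 0, Sum.inr 1)} :
      Finset ((U ⊕ Fin 2) × (V ⊕ Fin 2))))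
  · simp [Finset.card_erase_of_mem, Finset.card_univ, Fintype.card_sum, hUV]
  · rw [Finset.card_insert_of_notMem (by simp), Finset.card_singleton]
    simp only [Finset.card_erase_of_mem (Finset.mem_univ _), Finset.card_univ,
      Fintype.card_sum, Fintype.card_fin]
    omega
  · intro u; simp
  · intro v; simp
  · ext x
    rcases x with u | i
    · simp only [Finset.image_insert, Finset.image_singleton, Finset.mem_erase,
        Finset.mem_univ, and_true, Finset.mem_union, Finset.mem_image,
        Finset.mem_insert, Finset.mem_singleton]
      constructor
      · intro _
        by_cases hu : u = ustar
        · subst hu; right; left; rfl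
        · exact Or.inl ⟨u, by simp [hu], rfl⟩
      · intro _; simp
    · simp only [Finset.image_insert, Finset.image_singleton, Finset.mem_erase,
        Finset.mem_univ, and_true, Finset.mem_union, Finset.mem_image,
        Finset.mem_insert, Finset.mem_singleton]
      constructor
      · intro hi
        right; right
        have h1 : i ≠ 1 := fun h => hi (by rw [h])
        have : i = 0 := by omega
        subst this; rfl
      · rintro (⟨u, _, h⟩ | h | h)
        · exact absurd h (by simp)
        · exact absurd h (by simp)
        · have : i = 0 := by simpa using h
          subst this
          simp only [ne_eq, Sum.inr.injEq]
          decide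
  · ext x
    rcases x with v | j
    · simp only [Finset.image_insert, Finset.image_singleton, Finset.mem_erase,
        Finset.mem_univ, and_true, Finset.mem_union, Finset.mem_image,
        Finset.mem_insert, Finset.mem_singleton]
      constructor
      · intro hv
        exact Or.inl ⟨v, by simpa using hv, rfl⟩
      · rintro (⟨w, hw, h⟩ | h | h) <;> simp_all
    · simp only [Finset.image_insert, Finset.image_singleton, Finset.mem_erase,
        Finset.mem_univ, and_true, Finset.mem_union, Finset.mem_image,
        Finset.mem_insert, Finset.mem_singleton]
      constructor
      · intro _
        rcases Fin.exists_fin_two.mp ⟨j, rfl⟩ with h | h <;> subst h <;> simp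
      · intro _; simp
  · intro p hp
    rcases Finset.mem_insert.mp hp with rfl | hp
    · simp [extendRel]
    · rcases Finset.mem_singleton.mp hp with rfl
      simp [extendRel]
  · intro p hp q
    rcases Finset.mem_insert.mp hp with rfl | hp
    · simp [lift, Prod.ext_iff]
    · rcases Finset.mem_singleton.mp hp with rfl
      simp [lift, Prod.ext_iff]
  · intro M' hM'
    have injf := matchOn_fst_injOn hM'
    have injs := matchOn_snd_injOn hM'
      (by simp [Finset.card_erase_of_mem, Finset.card_univ, Fintype.card_sum, hUV])
    have hnofst : ∀ r ∈ M', r.1 ≠ (Sum.inr 1 : U ⊕ Fin 2) := by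
      intro r hr hcon
      have : (Sum.inr 1 : U ⊕ Fin 2) ∈ M'.image Prod.fst :=
        Finset.mem_image.mpr ⟨r, hr, hcon⟩
      rw [hM'.2.1] at this
      simp at this
    obtain ⟨p, hp, hp2⟩ := Finset.mem_image.mp
      (show (Sum.inr 1 : V ⊕ Fin 2) ∈ M'.image Prod.snd by
        rw [hM'.2.2.1]; simp)
    have h1 : ((Sum.inr 0, Sum.inr 1) : (U ⊕ Fin 2) × (V ⊕ Fin 2)) ∈ M' := by
      rcases pair_cases (hM'.2.2.2 p hp) with ⟨u, v, rfl⟩ | rfl | rfl | rfl | rfl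
      · exact absurd hp2 (by simp)
      · exact absurd hp2 (by simp)
      · exact absurd hp2 (by simp)
      · exact absurd hp2 (by simp)
      · exact hp
    obtain ⟨q, hq, hq2⟩ := Finset.mem_image.mp
      (show (Sum.inr 0 : V ⊕ Fin 2) ∈ M'.image Prod.snd by
        rw [hM'.2.2.1]; simp)
    have h2 : ((Sum.inl ustar, Sum.inr 0) : (U ⊕ Fin 2) × (V ⊕ Fin 2)) ∈ M' := by
      rcases pair_cases (hM'.2.2.2 q hq) with ⟨u, v, rfl⟩ | rfl | rfl | rfl | rfl
      · exact absurd hq2 (by simp)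
      · exact hq
      · exact absurd hq2 (by simp)
      · exact absurd (rfl : (Sum.inr 1 : U ⊕ Fin 2) = Sum.inr 1) (hnofst _ hq)
      · exact absurd hq2 (by simp)
    refine ⟨Finset.insert_subset h2 (Finset.singleton_subset_iff.mpr h1), ?_⟩
    intro r hr
    rcases pair_cases (hM'.2.2.2 r hr) with ⟨u, v, rfl⟩ | rfl | rfl | rfl | rfl
    · exact Or.inr ⟨u, v, rfl⟩
    · exact Or.inl (by simp)
    · have := injf hr h1 rfl
      exact absurd this (by simp)
    · exact absurd (rfl : (Sum.inr 1 : U ⊕ Fin 2) = Sum.inr 1) (hnofst _ hr)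
    · exact Or.inl (by simp)

lemma case_inr0 (hUV : Fintype.card U = Fintype.card V) :
    (matchOn (extendRel E ustar vstar)
        (Finset.univ.erase (Sum.inr 1)) (Finset.univ.erase (Sum.inr 0))).ncard =
      (matchOn E (Finset.univ : Finset U) (Finset.univ : Finset V)).ncard := by
  apply ncard_case
    (e := ({(Sum.inr 0, Sum.inr 1)} : Finset ((U ⊕ Fin 2) × (V ⊕ Fin 2))))
  · simp [Finset.card_erase_of_mem, Finset.card_univ, Fintype.card_sum, hUV]
  · simp [Finset.card_erase_of_mem, Finset.card_univ, Fintype.card_sum]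
  · intro u; simp
  · intro v; simp
  · ext x
    rcases x with u | i
    · simp
    · simp only [Finset.image_singleton, Finset.mem_erase,
        Finset.mem_univ, and_true, Finset.mem_union, Finset.mem_image,
        Finset.mem_singleton]
      constructor
      · intro hi
        right
        have h1 : i ≠ 1 := fun h => hi (by rw [h])
        have : i = 0 := by omega
        subst this; rfl
      · rintro (⟨u, _, h⟩ | h)
        · exact absurd h (by simp)
        · have : i = 0 := by simpa using h
          subst this
          simp only [ne_eq, Sum.inr.injEq]
          decide
  · ext x
    rcases x with v | j
    · simp
    · simp only [Finset.image_singleton, Finset.mem_erase,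
        Finset.mem_univ, and_true, Finset.mem_union, Finset.mem_image,
        Finset.mem_singleton]
      constructor
      · intro hj
        right
        have h1 : j ≠ 0 := fun h => hj (by rw [h])
        have : j = 1 := by omega
        subst this; rfl
      · rintro (⟨w, _, h⟩ | h)
        · exact absurd h (by simp)
        · have : j = 1 := by simpa using h
          subst this
          simp only [ne_eq, Sum.inr.injEq]
          decide
  · intro p hp
    rcases Finset.mem_singleton.mp hp with rfl
    simp [extendRel]
  · intro p hp q
    rcases Finset.mem_singleton.mp hp with rfl
    simp [lift, Prod.ext_iff]
  · intro M' hM'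
    have injf := matchOn_fst_injOn hM'
    have hnofst : ∀ r ∈ M', r.1 ≠ (Sum.inr 1 : U ⊕ Fin 2) := by
      intro r hr hcon
      have : (Sum.inr 1 : U ⊕ Fin 2) ∈ M'.image Prod.fst :=
        Finset.mem_image.mpr ⟨r, hr, hcon⟩
      rw [hM'.2.1] at this
      simp at this
    have hnosnd : ∀ r ∈ M', r.2 ≠ (Sum.inr 0 : V ⊕ Fin 2) := by
      intro r hr hcon
      have : (Sum.inr 0 : V ⊕ Fin 2) ∈ M'.image Prod.snd :=
        Finset.mem_image.mpr ⟨r, hr, hcon⟩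
      rw [hM'.2.2.1] at this
      simp at this
    obtain ⟨p, hp, hp2⟩ := Finset.mem_image.mp
      (show (Sum.inr 1 : V ⊕ Fin 2) ∈ M'.image Prod.snd by
        rw [hM'.2.2.1]; simp)
    have h1 : ((Sum.inr 0, Sum.inr 1) : (U ⊕ Fin 2) × (V ⊕ Fin 2)) ∈ M' := by
      rcases pair_cases (hM'.2.2.2 p hp) with ⟨u, v, rfl⟩ | rfl | rfl | rfl | rfl
      · exact absurd hp2 (by simp)
      · exact absurd hp2 (by simp)
      · exact absurd hp2 (by simp)
      · exact absurd hp2 (by simp)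
      · exact hp
    refine ⟨Finset.singleton_subset_iff.mpr h1, ?_⟩
    intro r hr
    rcases pair_cases (hM'.2.2.2 r hr) with ⟨u, v, rfl⟩ | rfl | rfl | rfl | rfl
    · exact Or.inr ⟨u, v, rfl⟩
    · exact absurd (rfl : (Sum.inr 0 : V ⊕ Fin 2) = Sum.inr 0) (hnosnd _ hr)
    · have := injf hr h1 rfl
      exact absurd this (by simp)
    · exact absurd (rfl : (Sum.inr 1 : U ⊕ Fin 2) = Sum.inr 1) (hnofst _ hr)
    · exact Or.inl (by simp)

lemma case_inr1 (hUV : Fintype.card U = Fintype.card V) :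
    (matchOn (extendRel E ustar vstar)
        (Finset.univ.erase (Sum.inr 1)) (Finset.univ.erase (Sum.inr 1))).ncard =
      (matchOn E (Finset.univ.erase ustar) (Finset.univ.erase vstar)).ncard := by
  have hpos : 0 < Fintype.card U := Fintype.card_pos_iff.mpr ⟨ustar⟩
  apply ncard_case
    (e := ({(Sum.inl ustar, Sum.inr 0), (Sum.inr 0, Sum.inl vstar)} :
      Finset ((U ⊕ Fin 2) × (V ⊕ Fin 2))))
  · simp [Finset.card_erase_of_mem, Finset.card_univ, Fintype.card_sum, hUV]
  · rw [Finset.card_insert_of_notMem (by simp), Finset.card_singleton]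
    simp only [Finset.card_erase_of_mem (Finset.mem_univ _), Finset.card_univ,
      Fintype.card_sum, Fintype.card_fin]
    omega
  · intro u; simp
  · intro v; simp
  · ext x
    rcases x with u | i
    · simp only [Finset.image_insert, Finset.image_singleton, Finset.mem_erase,
        Finset.mem_univ, and_true, Finset.mem_union, Finset.mem_image,
        Finset.mem_insert, Finset.mem_singleton]
      constructor
      · intro _
        by_cases hu : u = ustar
        · subst hu; right; left; rfl
        · exact Or.inl ⟨u, by simp [hu], rfl⟩
      · intro _; simp
    · simp only [Finset.image_insert, Finset.image_singleton, Finset.mem_erase,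
        Finset.mem_univ, and_true, Finset.mem_union, Finset.mem_image,
        Finset.mem_insert, Finset.mem_singleton]
      constructor
      · intro hi
        right; right
        have h1 : i ≠ 1 := fun h => hi (by rw [h])
        have : i = 0 := by omega
        subst this; rfl
      · rintro (⟨u, _, h⟩ | h | h)
        · exact absurd h (by simp)
        · exact absurd h (by simp)
        · have : i = 0 := by simpa using h
          subst this
          simp only [ne_eq, Sum.inr.injEq]
          decide
  · ext x
    rcases x with v | j
    · simp only [Finset.image_insert, Finset.image_singleton, Finset.mem_erase,
        Finset.mem_univ, and_true, Finset.mem_union, Finset.mem_image,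
        Finset.mem_insert, Finset.mem_singleton]
      constructor
      · intro _
        by_cases hv : v = vstar
        · subst hv; right; right; rfl
        · exact Or.inl ⟨v, by simp [hv], rfl⟩
      · intro _; simp
    · simp only [Finset.image_insert, Finset.image_singleton, Finset.mem_erase,
        Finset.mem_univ, and_true, Finset.mem_union, Finset.mem_image,
        Finset.mem_insert, Finset.mem_singleton]
      constructor
      · intro hj
        right; left
        have h1 : j ≠ 1 := fun h => hj (by rw [h])
        have : j = 0 := by omega
        subst this; rfl
      · rintro (⟨w, _, h⟩ | h | h)
        · exact absurd h (by simp)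
        · have : j = 0 := by simpa using h
          subst this
          simp only [ne_eq, Sum.inr.injEq]
          decide
        · exact absurd h (by simp)
  · intro p hp
    rcases Finset.mem_insert.mp hp with rfl | hp
    · simp [extendRel]
    · rcases Finset.mem_singleton.mp hp with rfl
      simp [extendRel]
  · intro p hp q
    rcases Finset.mem_insert.mp hp with rfl | hp
    · simp [lift, Prod.ext_iff]
    · rcases Finset.mem_singleton.mp hp with rfl
      simp [lift, Prod.ext_iff]
  · intro M' hM'
    have hnofst : ∀ r ∈ M', r.1 ≠ (Sum.inr 1 : U ⊕ Fin 2) := by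
      intro r hr hcon
      have : (Sum.inr 1 : U ⊕ Fin 2) ∈ M'.image Prod.fst :=
        Finset.mem_image.mpr ⟨r, hr, hcon⟩
      rw [hM'.2.1] at this
      simp at this
    have hnosnd : ∀ r ∈ M', r.2 ≠ (Sum.inr 1 : V ⊕ Fin 2) := by
      intro r hr hcon
      have : (Sum.inr 1 : V ⊕ Fin 2) ∈ M'.image Prod.snd :=
        Finset.mem_image.mpr ⟨r, hr, hcon⟩
      rw [hM'.2.2.1] at this
      simp at this
    obtain ⟨p, hp, hp2⟩ := Finset.mem_image.mp
      (show (Sum.inr 0 : V ⊕ Fin 2) ∈ M'.image Prod.snd by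
        rw [hM'.2.2.1]; simp)
    have h1 : ((Sum.inl ustar, Sum.inr 0) : (U ⊕ Fin 2) × (V ⊕ Fin 2)) ∈ M' := by
      rcases pair_cases (hM'.2.2.2 p hp) with ⟨u, v, rfl⟩ | rfl | rfl | rfl | rfl
      · exact absurd hp2 (by simp)
      · exact hp
      · exact absurd hp2 (by simp)
      · exact absurd (rfl : (Sum.inr 1 : U ⊕ Fin 2) = Sum.inr 1) (hnofst _ hp)
      · exact absurd hp2 (by simp)
    obtain ⟨q, hq, hq1⟩ := Finset.mem_image.mp
      (show (Sum.inr 0 : U ⊕ Fin 2) ∈ M'.image Prod.fst by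
        rw [hM'.2.1]; simp)
    have h2 : ((Sum.inr 0, Sum.inl vstar) : (U ⊕ Fin 2) × (V ⊕ Fin 2)) ∈ M' := by
      rcases pair_cases (hM'.2.2.2 q hq) with ⟨u, v, rfl⟩ | rfl | rfl | rfl | rfl
      · exact absurd hq1 (by simp)
      · exact absurd hq1 (by simp)
      · exact hq
      · exact absurd hq1 (by simp)
      · exact absurd (rfl : (Sum.inr 1 : V ⊕ Fin 2) = Sum.inr 1) (hnosnd _ hq)
    refine ⟨Finset.insert_subset h1 (Finset.singleton_subset_iff.mpr h2), ?_⟩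
    intro r hr
    rcases pair_cases (hM'.2.2.2 r hr) with ⟨u, v, rfl⟩ | rfl | rfl | rfl | rfl
    · exact Or.inr ⟨u, v, rfl⟩
    · exact Or.inl (by simp)
    · exact Or.inl (by simp)
    · exact absurd (rfl : (Sum.inr 1 : U ⊕ Fin 2) = Sum.inr 1) (hnofst _ hr)
    · exact absurd (rfl : (Sum.inr 1 : V ⊕ Fin 2) = Sum.inr 1) (hnosnd _ hr)

end APaux

/-- Let `G = (U ∪ V, E)` be bipartite with `|M(G)| > 0`, fix `u* ∈ U`, `v* ∈ V`,
and form `G'` by appending the paths `(u*, v', u'')` and `(v*, u', v'')`.  Then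
`|M(G')| = |M(G)|` and
`Σ_{v ∈ V'} |N_{u'',v}(G')| = Σ_{v ∈ V} |N_{u*,v}(G)| + |M(G)| + |N_{u*,v*}(G)|`. -/
theorem appended_paths_near_perfect_identity {U V : Type*}
    [Fintype U] [Fintype V] [DecidableEq U] [DecidableEq V]
    (E : U → V → Prop) (ustar : U) (vstar : V)
    (hcard : Fintype.card U = Fintype.card V)
    (hM : 0 < Set.ncard (matchOn E Finset.univ Finset.univ)) :
    Set.ncard (matchOn (extendRel E ustar vstar) Finset.univ Finset.univ) =
      Set.ncard (matchOn E Finset.univ Finset.univ) ∧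
    ∑ v : V ⊕ Fin 2,
        Set.ncard (matchOn (extendRel E ustar vstar)
          (Finset.univ.erase (Sum.inr 1)) (Finset.univ.erase v)) =
      (∑ v : V, Set.ncard (matchOn E (Finset.univ.erase ustar) (Finset.univ.erase v))) +
        Set.ncard (matchOn E Finset.univ Finset.univ) +
        Set.ncard (matchOn E (Finset.univ.erase ustar) (Finset.univ.erase vstar)) := by
  refine ⟨APaux.case_perfect hcard, ?_⟩
  rw [Fintype.sum_sum_type, Fin.sum_univ_two]
  rw [APaux.case_inr0 (E := E) (ustar := ustar) (vstar := vstar) hcard]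
  rw [APaux.case_inr1 (E := E) (ustar := ustar) (vstar := vstar) hcard]
  rw [Finset.sum_congr rfl (fun v _ => APaux.case_inl (E := E) (ustar := ustar)
    (vstar := vstar) hcard v)]
  ring
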